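/- The equation (π/2 + arcsin σ)·√(1 − σ²) = 1 + σ has exactly one solution σ in the interval [0, 1). -/

import Mathlib

open Real Set

private noncomputable def f10 : ℝ → ℝ :=
  fun σ => (Real.pi / 2 + Real.arcsin σ) * Real.sqrt (1 - σ ^ 2) - (1 + σ)

private lemma f10_cont : Continuous f10 := by
  unfold f10
  exact ((continuous_const.add Real.continuous_arcsin).mul
    ((continuous_const.sub (continuous_pow 2)).sqrt)).sub
    (continuous_const.add continuous_id)

private lemma f10_deriv {x : ℝ} (hx : x ∈ Ioo (0:ℝ) 1) :
    HasDerivAt f10 (-((Real.pi / 2 + Real.arcsin x) * x / Real.sqrt (1 - x ^ 2))) x := by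
  obtain ⟨hx0, hx1⟩ := hx
  have h1 : (0:ℝ) < 1 - x ^ 2 := by nlinarith
  have hs : 0 < Real.sqrt (1 - x ^ 2) := Real.sqrt_pos.mpr h1
  have ha : HasDerivAt (fun y : ℝ => Real.pi / 2 + Real.arcsin y)
      (1 / Real.sqrt (1 - x ^ 2)) x :=
    (Real.hasDerivAt_arcsin (by linarith) (by linarith)).const_add _
  have hq : HasDerivAt (fun y : ℝ => 1 - y ^ 2) (-(2 * x)) x := by
    simpa using (hasDerivAt_pow 2 x).const_sub 1
  have hsqD : HasDerivAt (fun y : ℝ => Real.sqrt (1 - y ^ 2))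
      (-(2 * x) / (2 * Real.sqrt (1 - x ^ 2))) x := hq.sqrt (ne_of_gt h1)
  have h := (ha.mul hsqD).sub ((hasDerivAt_id x).const_add 1)
  have hseq : Real.sqrt (1 - x ^ 2) * Real.sqrt (1 - x ^ 2) = 1 - x ^ 2 :=
    Real.mul_self_sqrt h1.le
  refine (show HasDerivAt f10 _ x from h).congr_deriv ?_
  field_simp
  ring

private lemma f10_anti : StrictAntiOn f10 (Ico (0:ℝ) 1) := by
  apply strictAntiOn_of_deriv_neg (convex_Ico 0 1) f10_cont.continuousOn
  intro x hx
  rw [interior_Ico] at hx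
  rw [(f10_deriv hx).deriv]
  have hs : 0 < Real.sqrt (1 - x ^ 2) := Real.sqrt_pos.mpr (by nlinarith [hx.1, hx.2])
  have harc : 0 ≤ Real.arcsin x := Real.arcsin_nonneg.mpr hx.1.le
  have hp : 0 < Real.pi / 2 + Real.arcsin x := by linarith [Real.pi_pos]
  have : 0 < (Real.pi / 2 + Real.arcsin x) * x / Real.sqrt (1 - x ^ 2) :=
    div_pos (mul_pos hp hx.1) hs
  linarith

/-- The equation `(π/2 + arcsin σ)·√(1 − σ²) = 1 + σ` has exactly one solution
`σ ∈ [0, 1)`. -/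
theorem stmt_10 :
    ∃! σ : ℝ, σ ∈ Set.Ico (0 : ℝ) 1 ∧
      (Real.pi / 2 + Real.arcsin σ) * Real.sqrt (1 - σ ^ 2) = 1 + σ := by
  have hf0 : 0 < f10 0 := by
    unfold f10
    simp [Real.arcsin_zero]
    linarith [Real.pi_gt_three]
  have hsqb : Real.sqrt (1 - (0.99:ℝ) ^ 2) ≤ 0.15 := by
    have h : (1 - (0.99:ℝ) ^ 2) ≤ (0.15:ℝ) ^ 2 := by norm_num
    calc Real.sqrt (1 - (0.99:ℝ) ^ 2) ≤ Real.sqrt ((0.15:ℝ)^2) := Real.sqrt_le_sqrt h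
      _ = 0.15 := Real.sqrt_sq (by norm_num)
  have hfb : f10 0.99 < 0 := by
    unfold f10
    have harc : Real.arcsin 0.99 ≤ Real.pi / 2 := Real.arcsin_le_pi_div_two _
    have harc0 : 0 ≤ Real.arcsin 0.99 := Real.arcsin_nonneg.mpr (by norm_num)
    have hsn : 0 ≤ Real.sqrt (1 - (0.99:ℝ) ^ 2) := Real.sqrt_nonneg _
    have hmul : (Real.pi / 2 + Real.arcsin 0.99) * Real.sqrt (1 - (0.99:ℝ) ^ 2)
        ≤ Real.pi * 0.15 := by
      apply mul_le_mul (by linarith) hsqb hsn (by linarith [Real.pi_pos])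
    nlinarith [Real.pi_lt_d2]
  have hsub : (0:ℝ) ∈ Icc (f10 0.99) (f10 0) := ⟨hfb.le, hf0.le⟩
  obtain ⟨σ, hσmem, hσ0⟩ :=
    intermediate_value_Icc' (by norm_num : (0:ℝ) ≤ 0.99) f10_cont.continuousOn hsub
  have hσIco : σ ∈ Ico (0:ℝ) 1 := ⟨hσmem.1, lt_of_le_of_lt hσmem.2 (by norm_num)⟩
  refine ⟨σ, ⟨hσIco, ?_⟩, ?_⟩
  · have := hσ0
    unfold f10 at this
    linarith
  · rintro y ⟨hy, hyeq⟩
    have hfy : f10 y = 0 := by unfold f10; linarith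
    have hfσ : f10 σ = 0 := hσ0
    exact f10_anti.injOn hy hσIco (by rw [hfy, hfσ])
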